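/- Suppose G is a finite abelian group with a subgroup H such that there is a strong starter in the quotient group G/H and a strong complete mapping of H. Then there is a strong frame starter in G \ H. -/

import Mathlib

open scoped Classical

variable {G : Type*} [AddCommGroup G]

/-- The multiset of all elements appearing in the pairs of `S`. -/
def starterElems (S : Finset (G × G)) : Multiset G :=
  S.val.bind fun p => {p.1, p.2}

/-- The multiset of all differences `±(x - y)` arising from the pairs of `S`. -/
def starterDiffs (S : Finset (G × G)) : Multiset G :=
  S.val.bind fun p => {p.1 - p.2, p.2 - p.1}

/-- `S` is a frame starter in `G \ H`: its pairs partition `G \ H` and its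
differences `±(x - y)` enumerate each element of `G \ H` exactly once. -/
def IsFrameStarter (H : AddSubgroup G) (S : Finset (G × G)) : Prop :=
  (∀ z : G, (starterElems S).count z = if z ∈ H then 0 else 1) ∧
  (∀ z : G, (starterDiffs S).count z = if z ∈ H then 0 else 1)

/-- A frame starter is strong if the pair sums are pairwise distinct and avoid `H`. -/
def IsStrongFrameStarter (H : AddSubgroup G) (S : Finset (G × G)) : Prop :=
  IsFrameStarter H S ∧
  (∀ p ∈ S, p.1 + p.2 ∉ H) ∧
  (∀ p ∈ S, ∀ q ∈ S, p.1 + p.2 = q.1 + q.2 → p = q)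

/-- A strong complete mapping of an abelian group. -/
def IsStrongCompleteMapping {A : Type*} [AddCommGroup A] (φ : A → A) : Prop :=
  Function.Bijective φ ∧ Function.Bijective (fun x => φ x - x) ∧
    Function.Bijective (fun x => φ x + x)

/-- Count in a bind of pair-multisets as a finite sum of indicators. -/
lemma count_bind_pair {ι α : Type*} [DecidableEq α] (A : Finset ι) (u v : ι → α) (z : α) :
    Multiset.count z (A.val.bind fun i => ({u i, v i} : Multiset α)) =
      ∑ i ∈ A, ((if z = u i then 1 else 0) + (if z = v i then 1 else 0)) := by
  rw [Multiset.count_bind]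
  show _ = (A.val.map _).sum
  congr 1
  apply Multiset.map_congr rfl
  intro i _
  by_cases h1 : z = u i <;> by_cases h2 : z = v i <;>
    (simp [Multiset.count_cons, Multiset.count_singleton, h1, h2]; try omega)

/-- Summing an indicator of a coset condition over a subgroup via a bijection. -/
lemma sum_shift (H : AddSubgroup G) [Fintype H] (ψ : H → H) (hψ : Function.Bijective ψ)
    (c z : G) :
    (∑ h : H, if z = c + (ψ h : G) then (1 : ℕ) else 0) = if z - c ∈ H then 1 else 0 := by
  by_cases hz : z - c ∈ H
  · obtain ⟨h0, hh0⟩ := hψ.2 ⟨z - c, hz⟩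
    rw [if_pos hz, Finset.sum_eq_single h0]
    · rw [hh0, if_pos]
      show z = c + (z - c)
      abel
    · intro h _ hne
      rw [if_neg]
      intro hzz
      apply hne
      apply hψ.1
      apply Subtype.ext
      have h1 : (ψ h : G) = z - c := by rw [hzz]; abel
      have h2 : (ψ h0 : G) = z - c := by rw [hh0]
      rw [h1, h2]
    · intro hni; exact absurd (Finset.mem_univ h0) hni
  · rw [if_neg hz]
    refine Finset.sum_eq_zero fun h _ => if_neg fun hzz => hz ?_
    have : z - c = (ψ h : G) := by rw [hzz]; abel
    rw [this]; exact (ψ h).2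

lemma count_indep {α : Type*} (i1 i2 : DecidableEq α) (a : α) (m : Multiset α) :
    @Multiset.count α i1 a m = @Multiset.count α i2 a m := by
  rw [Subsingleton.elim i1 i2]

theorem stmt_14 [Fintype G] (H : AddSubgroup G)
    (hT : ∃ T : Finset ((G ⧸ H) × (G ⧸ H)),
      IsStrongFrameStarter (⊥ : AddSubgroup (G ⧸ H)) T)
    (hφ : ∃ φ : H → H, IsStrongCompleteMapping φ) :
    ∃ S : Finset (G × G), IsStrongFrameStarter H S := by
  obtain ⟨T, ⟨hTe, hTd⟩, hTs, hTinj⟩ := hT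
  obtain ⟨φ, hφb, hφd, hφs⟩ := hφ
  -- key quotient facts
  have key : ∀ (w c : G), ((w : G ⧸ H) = (c : G ⧸ H)) ↔ w - c ∈ H := fun w c =>
    QuotientAddGroup.eq_iff_sub_mem
  have keyz : ∀ w : G, ((w : G ⧸ H) = 0) ↔ w ∈ H := fun w =>
    QuotientAddGroup.eq_zero_iff w
  set f : ((G ⧸ H) × (G ⧸ H)) × H → G × G :=
    fun x => (Quotient.out x.1.1 + (φ x.2 : G), Quotient.out x.1.2 + (x.2 : G)) with hf
  have mkout : ∀ a : G ⧸ H, ((Quotient.out a : G) : G ⧸ H) = a := fun a =>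
    QuotientAddGroup.out_eq' a
  have mkadd : ∀ (a : G ⧸ H) (h : H), ((Quotient.out a + (h : G) : G) : G ⧸ H) = a := by
    intro a h
    rw [show ((Quotient.out a + (h : G) : G) : G ⧸ H)
        = ((Quotient.out a : G) : G ⧸ H) + ((h : G) : G ⧸ H) from rfl]
    rw [mkout, (keyz _).2 h.2, add_zero]
  have mksub : ∀ a b : G ⧸ H, ((Quotient.out a - Quotient.out b : G) : G ⧸ H) = a - b := by
    intro a b
    rw [show ((Quotient.out a - Quotient.out b : G) : G ⧸ H)
        = ((Quotient.out a : G) : G ⧸ H) - ((Quotient.out b : G) : G ⧸ H) from rfl, mkout, mkout]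
  have mkadd2 : ∀ a b : G ⧸ H, ((Quotient.out a + Quotient.out b : G) : G ⧸ H) = a + b := by
    intro a b
    rw [show ((Quotient.out a + Quotient.out b : G) : G ⧸ H)
        = ((Quotient.out a : G) : G ⧸ H) + ((Quotient.out b : G) : G ⧸ H) from rfl, mkout, mkout]
  have hfinj : Function.Injective f := by
    rintro ⟨⟨a, b⟩, h⟩ ⟨⟨a', b'⟩, h'⟩ hx
    simp only [hf, Prod.mk.injEq] at hx
    obtain ⟨h1, h2⟩ := hx
    have hb : b = b' := by rw [← mkadd b h, ← mkadd b' h', h2]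
    have ha : a = a' := by rw [← mkadd a (φ h), ← mkadd a' (φ h'), h1]
    subst hb; subst ha
    have hh : h = h' := Subtype.ext (add_left_cancel h2)
    rw [hh]
  -- bijectivity of auxiliary maps
  have hψ2 : Function.Bijective (fun x : H => x - φ x) := by
    have e : (fun x : H => x - φ x) = (fun y : H => -y) ∘ (fun x : H => φ x - x) := by
      funext x; simp [neg_sub]
    rw [e]; exact neg_involutive.bijective.comp hφd
  refine ⟨(T ×ˢ (Finset.univ : Finset H)).map ⟨f, hfinj⟩, ⟨?_, ?_⟩, ?_, ?_⟩
  · -- elements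
    intro z
    have lhs : (starterElems ((T ×ˢ (Finset.univ : Finset H)).map ⟨f, hfinj⟩)).count z
        = ∑ p ∈ T, ∑ h : H,
          ((if z = Quotient.out p.1 + (φ h : G) then 1 else 0)
            + (if z = Quotient.out p.2 + (h : G) then 1 else 0)) := by
      rw [starterElems, Finset.map_val]
      simp only [Function.Embedding.coeFn_mk]
      rw [Multiset.bind_map]
      rw [count_bind_pair (T ×ˢ (Finset.univ : Finset H)) (fun x => (f x).1) (fun x => (f x).2) z]
      rw [Finset.sum_product]
    rw [lhs]
    have step : ∀ p ∈ T, (∑ h : H,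
          ((if z = Quotient.out p.1 + (φ h : G) then 1 else 0)
            + (if z = Quotient.out p.2 + (h : G) then 1 else 0)))
        = ((if (z : G ⧸ H) = p.1 then 1 else 0) + (if (z : G ⧸ H) = p.2 then 1 else 0)) := by
      intro p _
      rw [Finset.sum_add_distrib]
      rw [sum_shift H φ hφb]
      have hid := sum_shift H (fun h => h) Function.bijective_id (Quotient.out p.2) z
      rw [hid]
      exact congrArg₂ (· + ·)
        (if_congr (by rw [← key z (Quotient.out p.1), mkout]) rfl rfl)
        (if_congr (by rw [← key z (Quotient.out p.2), mkout]) rfl rfl)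
    rw [Finset.sum_congr rfl step, ← count_bind_pair T (fun p => p.1) (fun p => p.2) (z : G ⧸ H)]
    rw [show (T.val.bind fun p => ({p.1, p.2} : Multiset (G ⧸ H))) = starterElems T from rfl]
    refine (count_indep _ _ _ _).trans ((hTe ((z : G ⧸ H))).trans ?_)
    exact if_congr (by simp [AddSubgroup.mem_bot, keyz]) rfl rfl
  · -- differences
    intro z
    have lhs : (starterDiffs ((T ×ˢ (Finset.univ : Finset H)).map ⟨f, hfinj⟩)).count z
        = ∑ p ∈ T, ∑ h : H,
          ((if z = (f ((p.1, p.2), h)).1 - (f ((p.1, p.2), h)).2 then 1 else 0)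
            + (if z = (f ((p.1, p.2), h)).2 - (f ((p.1, p.2), h)).1 then 1 else 0)) := by
      rw [starterDiffs, Finset.map_val]
      simp only [Function.Embedding.coeFn_mk]
      rw [Multiset.bind_map]
      rw [count_bind_pair (T ×ˢ (Finset.univ : Finset H))
        (fun x => (f x).1 - (f x).2) (fun x => (f x).2 - (f x).1) z]
      rw [Finset.sum_product]
    rw [lhs]
    have step : ∀ p ∈ T, (∑ h : H,
          ((if z = (f ((p.1, p.2), h)).1 - (f ((p.1, p.2), h)).2 then 1 else 0)
            + (if z = (f ((p.1, p.2), h)).2 - (f ((p.1, p.2), h)).1 then 1 else 0)))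
        = ((if (z : G ⧸ H) = p.1 - p.2 then 1 else 0)
            + (if (z : G ⧸ H) = p.2 - p.1 then 1 else 0)) := by
      intro p _
      rw [Finset.sum_add_distrib]
      have e1 : ∀ h : H, (f ((p.1, p.2), h)).1 - (f ((p.1, p.2), h)).2
          = (Quotient.out p.1 - Quotient.out p.2) + (((fun x : H => φ x - x) h : H) : G) := by
        intro h; simp only [hf]; push_cast; abel
      have e2 : ∀ h : H, (f ((p.1, p.2), h)).2 - (f ((p.1, p.2), h)).1
          = (Quotient.out p.2 - Quotient.out p.1) + (((fun x : H => x - φ x) h : H) : G) := by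
        intro h; simp only [hf]; push_cast; abel
      have s1 : (∑ h : H, if z = (f ((p.1, p.2), h)).1 - (f ((p.1, p.2), h)).2 then (1 : ℕ) else 0)
          = ∑ h : H, if z = (Quotient.out p.1 - Quotient.out p.2)
              + (((fun x : H => φ x - x) h : H) : G) then (1 : ℕ) else 0 :=
        Finset.sum_congr rfl fun h _ => by rw [e1 h]
      have s2 : (∑ h : H, if z = (f ((p.1, p.2), h)).2 - (f ((p.1, p.2), h)).1 then (1 : ℕ) else 0)
          = ∑ h : H, if z = (Quotient.out p.2 - Quotient.out p.1)
              + (((fun x : H => x - φ x) h : H) : G) then (1 : ℕ) else 0 :=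
        Finset.sum_congr rfl fun h _ => by rw [e2 h]
      rw [s1, s2, sum_shift H _ hφd, sum_shift H _ hψ2]
      exact congrArg₂ (· + ·)
        (if_congr (by rw [← key z (Quotient.out p.1 - Quotient.out p.2), mksub]) rfl rfl)
        (if_congr (by rw [← key z (Quotient.out p.2 - Quotient.out p.1), mksub]) rfl rfl)
    rw [Finset.sum_congr rfl step, ← count_bind_pair T (fun p => p.1 - p.2) (fun p => p.2 - p.1)
      (z : G ⧸ H)]
    rw [show (T.val.bind fun p => ({p.1 - p.2, p.2 - p.1} : Multiset (G ⧸ H)))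
        = starterDiffs T from rfl]
    refine (count_indep _ _ _ _).trans ((hTd ((z : G ⧸ H))).trans ?_)
    exact if_congr (by simp [AddSubgroup.mem_bot, keyz]) rfl rfl
  · -- sums avoid H
    intro q hq
    obtain ⟨⟨⟨a, b⟩, h⟩, hx, rfl⟩ := Finset.mem_map.1 hq
    simp only [Function.Embedding.coeFn_mk, hf]
    intro hmem
    have hz : (((Quotient.out a + (φ h : G)) + (Quotient.out b + (h : G)) : G) : G ⧸ H) = 0 :=
      (keyz _).2 hmem
    rw [show (((Quotient.out a + (φ h : G)) + (Quotient.out b + (h : G)) : G) : G ⧸ H)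
        = ((Quotient.out a + (φ h : G) : G) : G ⧸ H)
          + ((Quotient.out b + (h : G) : G) : G ⧸ H) from rfl, mkadd, mkadd] at hz
    exact hTs (a, b) (Finset.mem_product.1 hx).1 (AddSubgroup.mem_bot.2 hz)
  · -- sums pairwise distinct
    intro q hq r hr hsum
    obtain ⟨⟨⟨a, b⟩, h⟩, hx, rfl⟩ := Finset.mem_map.1 hq
    obtain ⟨⟨⟨a', b'⟩, h'⟩, hx', rfl⟩ := Finset.mem_map.1 hr
    simp only [Function.Embedding.coeFn_mk, hf] at hsum ⊢
    have hzq : (((Quotient.out a + (φ h : G)) + (Quotient.out b + (h : G)) : G) : G ⧸ H)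
        = (((Quotient.out a' + (φ h' : G)) + (Quotient.out b' + (h' : G)) : G) : G ⧸ H) := by
      rw [hsum]
    rw [show (((Quotient.out a + (φ h : G)) + (Quotient.out b + (h : G)) : G) : G ⧸ H)
        = ((Quotient.out a + (φ h : G) : G) : G ⧸ H)
          + ((Quotient.out b + (h : G) : G) : G ⧸ H) from rfl, mkadd, mkadd] at hzq
    rw [show (((Quotient.out a' + (φ h' : G)) + (Quotient.out b' + (h' : G)) : G) : G ⧸ H)
        = ((Quotient.out a' + (φ h' : G) : G) : G ⧸ H)
          + ((Quotient.out b' + (h' : G) : G) : G ⧸ H) from rfl, mkadd, mkadd] at hzq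
    have hpq : ((a, b) : (G ⧸ H) × (G ⧸ H)) = (a', b') :=
      hTinj (a, b) (Finset.mem_product.1 hx).1 (a', b') (Finset.mem_product.1 hx').1 hzq
    rw [Prod.mk.injEq] at hpq
    obtain ⟨rfl, rfl⟩ := hpq
    have e : ∀ u v : H, (Quotient.out a + (u : G)) + (Quotient.out b + (v : G))
        = (Quotient.out a + Quotient.out b) + ((u + v : H) : G) := by
      intro u v; push_cast; abel
    rw [e (φ h) h, e (φ h') h'] at hsum
    have hsum2 : ((φ h + h : H) : G) = ((φ h' + h' : H) : G) := add_left_cancel hsum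
    have hh : h = h' := hφs.1 (Subtype.coe_injective hsum2)
    rw [hh]
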